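/- Suppose L = L(Γ) is the line graph of a finite connected simple graph Γ, and L is not isomorphic to F₁, F₂, or F₃. Then for any gain function ζ on L, the gain graph (L,ζ) is a gain-line graph (with parameter s) if and only if every odd triangle of L has gain s. -/

import Mathlib

open SimpleGraph

/-- `ψ` is a gain function on `Γ`: on adjacent ordered pairs, reversing the
orientation inverts the gain. -/
def IsGainFun {V G : Type} [Group G] (Γ : SimpleGraph V) (ψ : V → V → G) : Prop :=
  ∀ ⦃u v : V⦄, Γ.Adj u v → ψ v u = (ψ u v)⁻¹

/-- Two gain functions on `Γ` are switching equivalent. -/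
def SwitchingEquiv {V G : Type} [Group G] (Γ : SimpleGraph V) (ψ₁ ψ₂ : V → V → G) : Prop :=
  ∃ f : V → G, ∀ ⦃u v : V⦄, Γ.Adj u v → ψ₂ u v = (f u)⁻¹ * ψ₁ u v * f v

/-- A `G`-phase of `Γ`: a choice of a group element for every incident
(vertex, edge) pair (the non-incident entries of the phase matrix are `0`,
so they carry no data). -/
def GPhase {V : Type} (Γ : SimpleGraph V) (G : Type) : Type :=
  ∀ (v : V) (e : Γ.edgeSet), v ∈ (e : Sym2 V) → G

/-- `Ψ(H) = ψ`: the gain function associated with the phase `H` (with parameter `s₁`)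
is `ψ`, i.e. `ψ(u,v) = s₁ · H(u,e) · H(v,e)⁻¹` for `e = {u,v}`. -/
def PsiEq {V G : Type} [Group G] {Γ : SimpleGraph V} (s₁ : G) (H : GPhase Γ G)
    (ψ : V → V → G) : Prop :=
  ∀ ⦃u v : V⦄ (h : Γ.Adj u v),
    ψ u v = s₁ * H u ⟨s(u, v), h⟩ (Sym2.mem_mk_left u v)
      * (H v ⟨s(u, v), h⟩ (Sym2.mem_mk_right u v))⁻¹

/-- `Ψ_L(H) = ζ`: the gain function on the line graph associated with the phase `H`
(with parameter `s`) is `ζ`, i.e. `ζ(e_p,e_q) = s · H(w,e_p)⁻¹ · H(w,e_q)` whenever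
`w` is a common endpoint of the distinct edges `e_p, e_q`. -/
def PsiLEq {V G : Type} [Group G] {Γ : SimpleGraph V} (s : G) (H : GPhase Γ G)
    (ζ : Γ.edgeSet → Γ.edgeSet → G) : Prop :=
  ∀ (p q : Γ.edgeSet) (w : V) (hp : w ∈ (p : Sym2 V)) (hq : w ∈ (q : Sym2 V)), p ≠ q →
    ζ p q = s * (H w p hp)⁻¹ * H w q hq

/-- `(L, ζ)` is a gain-line graph (with parameter `s`): there are a graph `Γ`
with `L = L(Γ)` (up to isomorphism) and a `G`-phase `H` of `Γ` with `Ψ_L(H) = ζ`. -/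
def IsGainLine {VL G : Type} [Group G] (s : G) (L : SimpleGraph VL) (ζ : VL → VL → G) : Prop :=
  ∃ (V' : Type) (Γ : SimpleGraph V') (φ : L ≃g Γ.lineGraph) (H : GPhase Γ G),
    PsiLEq s H fun p q => ζ (φ.symm p) (φ.symm q)
/-- Three vertices forming a triangle of `L`. -/
def IsTriangle {V : Type} (L : SimpleGraph V) (a b c : V) : Prop :=
  L.Adj a b ∧ L.Adj b c ∧ L.Adj a c

/-- An odd triangle: some vertex `w` is adjacent to an odd number of its vertices. -/
def OddTriangle {V : Type} (L : SimpleGraph V) (a b c : V) : Prop :=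
  IsTriangle L a b c ∧ ∃ w : V, Odd ({x ∈ ({a, b, c} : Set V) | L.Adj x w}.ncard)

/-- An even triangle: every vertex `w` is adjacent to an even number of its vertices. -/
def EvenTriangle {V : Type} (L : SimpleGraph V) (a b c : V) : Prop :=
  IsTriangle L a b c ∧ ∀ w : V, Even ({x ∈ ({a, b, c} : Set V) | L.Adj x w}.ncard)
/-- The exceptional graph `F₁`: the diamond graph (`K₄` minus one edge). -/
def diamondGraph : SimpleGraph (Fin 4) :=
  SimpleGraph.fromRel (fun u v =>
    (u = 0 ∧ v = 1) ∨ (u = 1 ∧ v = 2) ∨ (u = 0 ∧ v = 2) ∨ (u = 1 ∧ v = 3) ∨ (u = 0 ∧ v = 3))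

/-- The exceptional graph `F₂`: the 4-wheel, a 4-cycle `0 1 2 3` plus the hub `4`. -/
def wheel4 : SimpleGraph (Fin 5) :=
  SimpleGraph.fromRel (fun u v =>
    (u = 0 ∧ v = 1) ∨ (u = 1 ∧ v = 2) ∨ (u = 2 ∧ v = 3) ∨ (u = 0 ∧ v = 3) ∨
    (u = 4 ∧ (v = 0 ∨ v = 1 ∨ v = 2 ∨ v = 3)))

/-- The exceptional graph `F₃`: the octahedron `K_{2,2,2}`. -/
def octahedron : SimpleGraph (Fin 3 × Fin 2) where
  Adj u v := u.1 ≠ v.1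
  symm := ⟨fun _ _ h => h.symm⟩
  loopless := ⟨fun _ h => h rfl⟩

/-! ### Auxiliary material for the proof -/

section GLAux

variable {G : Type} [Group G] {s : G}

private lemma gl_alg1 (hs : s * s = 1) (g : G) : s * (1:G)⁻¹ * (s * g) = g := by
  rw [inv_one, mul_one, ← mul_assoc, hs, one_mul]

private lemma gl_alg2 (hsc : ∀ g : G, s * g = g * s) (g : G) :
    s * (s * g)⁻¹ * 1 = g⁻¹ := by
  rw [mul_one, mul_inv_rev, ← mul_assoc, hsc g⁻¹, mul_assoc]
  simp

private lemma gl_alg3 (hsc : ∀ g : G, s * g = g * s) (g h : G) :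
    s * (s * g)⁻¹ * (s * h) = s * g⁻¹ * h := by
  rw [mul_inv_rev, ← mul_assoc, hsc g⁻¹, mul_assoc s, mul_assoc g⁻¹]
  simp [mul_assoc, ← hsc g⁻¹]

private lemma gl_alg4 (hs : s * s = 1) (hsc : ∀ g : G, s * g = g * s) (x y z : G) :
    (s * x⁻¹ * y) * (s * y⁻¹ * z) * (s * z⁻¹ * x) = s := by
  have move : ∀ g h : G, g * (s * h) = s * (g * h) := fun g h => by
    rw [← mul_assoc, ← hsc g, mul_assoc]
  have hss : ∀ g : G, s * (s * g) = g := fun g => by rw [← mul_assoc, hs, one_mul]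
  simp only [mul_assoc]
  simp only [move]
  rw [hss]
  simp

end GLAux

/-- Transport a graph isomorphism to line graphs. -/
def lineIso {α β : Type} {A : SimpleGraph α} {B : SimpleGraph β} (φ : A ≃g B) :
    A.lineGraph ≃g B.lineGraph where
  toEquiv := φ.mapEdgeSet
  map_rel_iff' := by
    intro e f
    simp only [lineGraph_adj_iff_exists]
    have he : ((φ.mapEdgeSet e : B.edgeSet) : Sym2 β) = Sym2.map φ e := rfl
    have hf : ((φ.mapEdgeSet f : B.edgeSet) : Sym2 β) = Sym2.map φ f := rfl
    constructor
    · rintro ⟨h1, v, hv1, hv2⟩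
      refine ⟨fun h => h1 (by rw [h]), φ.symm v, ?_, ?_⟩
      · rw [he, Sym2.mem_map] at hv1
        obtain ⟨u, hu, rfl⟩ := hv1
        simpa using hu
      · rw [hf, Sym2.mem_map] at hv2
        obtain ⟨u, hu, rfl⟩ := hv2
        simpa using hu
    · rintro ⟨h1, v, hv1, hv2⟩
      refine ⟨fun h => h1 (φ.mapEdgeSet.injective h), φ v, ?_, ?_⟩
      · rw [he, Sym2.mem_map]; exact ⟨v, hv1, rfl⟩
      · rw [hf, Sym2.mem_map]; exact ⟨v, hv2, rfl⟩

/-- Build a graph isomorphism from a bijective vertex enumeration. -/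
lemma nonempty_iso_of_surj {α β : Type} (A : SimpleGraph α) (B : SimpleGraph β)
    (g : β → α) (hg : Function.Bijective g)
    (h : ∀ i j, B.Adj i j ↔ A.Adj (g i) (g j)) : Nonempty (A ≃g B) := by
  let e := Equiv.ofBijective g hg
  refine ⟨⟨e.symm, ?_⟩⟩
  intro x y
  rw [h]
  have hx : g (e.symm x) = x := e.apply_symm_apply x
  have hy : g (e.symm y) = y := e.apply_symm_apply y
  rw [hx, hy]

def quadGraph (P₁ P₂ P₃ : Prop) : SimpleGraph (Fin 4) :=
  SimpleGraph.fromRel (fun u v =>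
    (u = 0 ∧ v = 1) ∨ (u = 0 ∧ v = 2) ∨ (u = 0 ∧ v = 3) ∨
    (P₁ ∧ u = 1 ∧ v = 2) ∨ (P₂ ∧ u = 1 ∧ v = 3) ∨ (P₃ ∧ u = 2 ∧ v = 3))

instance quadAdjDec (P₁ P₂ P₃ : Prop) [Decidable P₁] [Decidable P₂] [Decidable P₃] :
    DecidableRel (quadGraph P₁ P₂ P₃).Adj := fun x y =>
  decidable_of_iff _ (SimpleGraph.fromRel_adj _ x y).symm

instance : DecidableRel diamondGraph.Adj := fun x y =>
  decidable_of_iff _ (SimpleGraph.fromRel_adj _ x y).symm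

instance : DecidableRel wheel4.Adj := fun x y =>
  decidable_of_iff _ (SimpleGraph.fromRel_adj _ x y).symm

instance : DecidableRel octahedron.Adj := fun x y =>
  decidable_of_iff (x.1 ≠ y.1) Iff.rfl

instance lineAdjDec {α : Type} [Fintype α] [DecidableEq α] (A : SimpleGraph α) :
    DecidableRel A.lineGraph.Adj := fun e f =>
  decidable_of_iff _ (lineGraph_adj_iff_exists (G := A) (e₁ := e) (e₂ := f)).symm

lemma quadTFF_line : Nonempty ((quadGraph True False False).lineGraph ≃g diamondGraph) := by
  apply nonempty_iso_of_surj _ _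
    (![⟨s(0,1), by decide⟩, ⟨s(0,2), by decide⟩, ⟨s(0,3), by decide⟩, ⟨s(1,2), by decide⟩] :
      Fin 4 → (quadGraph True False False).edgeSet)
  · decide
  · decide

lemma quadFTF_line : Nonempty ((quadGraph False True False).lineGraph ≃g diamondGraph) := by
  apply nonempty_iso_of_surj _ _
    (![⟨s(0,1), by decide⟩, ⟨s(0,3), by decide⟩, ⟨s(0,2), by decide⟩, ⟨s(1,3), by decide⟩] :
      Fin 4 → (quadGraph False True False).edgeSet)
  · decide
  · decide

lemma quadFFT_line : Nonempty ((quadGraph False False True).lineGraph ≃g diamondGraph) := by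
  apply nonempty_iso_of_surj _ _
    (![⟨s(0,2), by decide⟩, ⟨s(0,3), by decide⟩, ⟨s(0,1), by decide⟩, ⟨s(2,3), by decide⟩] :
      Fin 4 → (quadGraph False False True).edgeSet)
  · decide
  · decide

lemma quadTTF_line : Nonempty ((quadGraph True True False).lineGraph ≃g wheel4) := by
  apply nonempty_iso_of_surj _ _
    (![⟨s(0,2), by decide⟩, ⟨s(1,2), by decide⟩, ⟨s(1,3), by decide⟩, ⟨s(0,3), by decide⟩,
       ⟨s(0,1), by decide⟩] : Fin 5 → (quadGraph True True False).edgeSet)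
  · decide
  · decide

lemma quadTFT_line : Nonempty ((quadGraph True False True).lineGraph ≃g wheel4) := by
  apply nonempty_iso_of_surj _ _
    (![⟨s(0,1), by decide⟩, ⟨s(1,2), by decide⟩, ⟨s(2,3), by decide⟩, ⟨s(0,3), by decide⟩,
       ⟨s(0,2), by decide⟩] : Fin 5 → (quadGraph True False True).edgeSet)
  · decide
  · decide

lemma quadFTT_line : Nonempty ((quadGraph False True True).lineGraph ≃g wheel4) := by
  apply nonempty_iso_of_surj _ _
    (![⟨s(0,1), by decide⟩, ⟨s(1,3), by decide⟩, ⟨s(2,3), by decide⟩, ⟨s(0,2), by decide⟩,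
       ⟨s(0,3), by decide⟩] : Fin 5 → (quadGraph False True True).edgeSet)
  · decide
  · decide

lemma quadTTT_line : Nonempty ((quadGraph True True True).lineGraph ≃g octahedron) := by
  apply nonempty_iso_of_surj _ _
    ((fun x => match x with
      | (0, 0) => ⟨s(0,1), by decide⟩
      | (0, 1) => ⟨s(2,3), by decide⟩
      | (1, 0) => ⟨s(0,2), by decide⟩
      | (1, 1) => ⟨s(1,3), by decide⟩
      | (2, 0) => ⟨s(0,3), by decide⟩
      | (2, 1) => ⟨s(1,2), by decide⟩) :
      Fin 3 × Fin 2 → (quadGraph True True True).edgeSet)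
  · decide
  · decide

set_option maxHeartbeats 1000000 in
lemma iso_quadGraph {V : Type} (Γ : SimpleGraph V) (w a b c : V) {P₁ P₂ P₃ : Prop}
    (hall : ∀ v : V, v = w ∨ v = a ∨ v = b ∨ v = c)
    (haw : a ≠ w) (hbw : b ≠ w) (hcw : c ≠ w) (hab : a ≠ b) (hac : a ≠ c) (hbc : b ≠ c)
    (hwa : Γ.Adj w a) (hwb : Γ.Adj w b) (hwc : Γ.Adj w c)
    (hAB : Γ.Adj a b ↔ P₁) (hAC : Γ.Adj a c ↔ P₂) (hBC : Γ.Adj b c ↔ P₃) :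
    Nonempty (Γ ≃g quadGraph P₁ P₂ P₃) := by
  classical
  refine ⟨⟨⟨fun v => if v = w then 0 else if v = a then 1 else if v = b then 2 else 3,
    ![w, a, b, c], ?_, ?_⟩, ?_⟩⟩
  · intro v
    rcases hall v with rfl | rfl | rfl | rfl <;>
      simp [haw, hbw, hcw, hab, hac, hbc, haw.symm, hbw.symm, hcw.symm, hab.symm,
        hac.symm, hbc.symm]
  · intro i
    fin_cases i <;>
      simp [haw, hbw, hcw, hab, hac, hbc, haw.symm, hbw.symm, hcw.symm, hab.symm,
        hac.symm, hbc.symm]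
  · intro x y
    rcases hall x with rfl | rfl | rfl | rfl <;> rcases hall y with rfl | rfl | rfl | rfl <;>
      simp only [Equiv.coe_fn_mk, if_pos, if_neg, haw, hbw, hcw, hab, hac, hbc,
        haw.symm, hbw.symm, hcw.symm, hab.symm, hac.symm, hbc.symm,
        ite_true, ite_false, if_true, if_false, eq_self_iff_true, Ne, not_false_iff] <;>
      simp [quadGraph, SimpleGraph.fromRel_adj, haw, hbw, hcw, hab, hac, hbc,
        haw.symm, hbw.symm, hcw.symm, hab.symm, hac.symm, hbc.symm,
        hwa, hwb, hwc, hwa.symm, hwb.symm, hwc.symm, ← hAB, ← hAC, ← hBC,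
        Γ.adj_comm, Fin.ext_iff, -Fin.val_eq_zero_iff] <;>
      tauto

lemma oddTriangle_map {VL VL' : Type} {L : SimpleGraph VL} {L' : SimpleGraph VL'}
    (φ : L ≃g L') {a b c : VL} (h : OddTriangle L a b c) :
    OddTriangle L' (φ a) (φ b) (φ c) := by
  obtain ⟨⟨h1, h2, h3⟩, w, hw⟩ := h
  refine ⟨⟨φ.map_adj_iff.mpr h1, φ.map_adj_iff.mpr h2, φ.map_adj_iff.mpr h3⟩, φ w, ?_⟩
  have himg : {x ∈ ({φ a, φ b, φ c} : Set VL') | L'.Adj x (φ w)}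
      = φ '' {x ∈ ({a, b, c} : Set VL) | L.Adj x w} := by
    ext y
    simp only [Set.mem_setOf_eq, Set.mem_insert_iff, Set.mem_singleton_iff, Set.mem_image]
    constructor
    · rintro ⟨hy1, hy2⟩
      refine ⟨φ.symm y, ⟨?_, ?_⟩, by simp⟩
      · rcases hy1 with rfl | rfl | rfl <;> simp
      · have : L'.Adj (φ (φ.symm y)) (φ w) := by simpa using hy2
        exact φ.map_adj_iff.mp this
    · rintro ⟨x, ⟨hx1, hx2⟩, rfl⟩
      refine ⟨?_, φ.map_adj_iff.mpr hx2⟩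
      rcases hx1 with rfl | rfl | rfl
      · left; rfl
      · right; left; rfl
      · right; right; rfl
  rw [himg, Set.ncard_image_of_injective _ (RelIso.injective φ)]
  exact hw

lemma commonVertex {V' : Type} (Γ' : SimpleGraph V') (p q r : Γ'.edgeSet)
    (h : OddTriangle Γ'.lineGraph p q r) :
    ∃ w : V', w ∈ (p : Sym2 V') ∧ w ∈ (q : Sym2 V') ∧ w ∈ (r : Sym2 V') := by
  classical
  obtain ⟨⟨hpq', hqr', hpr'⟩, f, hodd⟩ := h
  rw [lineGraph_adj_iff_exists] at hpq' hqr' hpr'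
  obtain ⟨hpq, u, hup, huq⟩ := hpq'
  obtain ⟨hqr, v, hvq, hvr⟩ := hqr'
  obtain ⟨hpr, t, htp, htr⟩ := hpr'
  by_contra hcom
  push_neg at hcom
  have huv : u ≠ v := fun h => hcom u hup huq (h ▸ hvr)
  have hut : u ≠ t := fun h => hcom u hup huq (h ▸ htr)
  have hvt : v ≠ t := fun h => hcom t htp (h ▸ hvq) htr
  have hp : (p : Sym2 V') = s(u, t) := (Sym2.mem_and_mem_iff hut).mp ⟨hup, htp⟩
  have hq : (q : Sym2 V') = s(u, v) := (Sym2.mem_and_mem_iff huv).mp ⟨huq, hvq⟩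
  have hr : (r : Sym2 V') = s(v, t) := (Sym2.mem_and_mem_iff hvt).mp ⟨hvr, htr⟩
  have mkAdj : ∀ (x g : Γ'.edgeSet) (α β : V'), (x : Sym2 V') = s(α, β) →
      (Γ'.lineGraph.Adj x g ↔ (x ≠ g ∧ (α ∈ (g : Sym2 V') ∨ β ∈ (g : Sym2 V')))) := by
    intro x g α β hx
    rw [lineGraph_adj_iff_exists]
    constructor
    · rintro ⟨h1, z, hz1, hz2⟩
      refine ⟨h1, ?_⟩
      rw [hx, Sym2.mem_iff] at hz1
      rcases hz1 with rfl | rfl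
      · exact Or.inl hz2
      · exact Or.inr hz2
    · rintro ⟨h1, h2 | h2⟩
      · exact ⟨h1, α, by rw [hx]; simp, h2⟩
      · exact ⟨h1, β, by rw [hx]; simp, h2⟩
  have Ap := fun g => mkAdj p g u t hp
  have Aq := fun g => mkAdj q g u v hq
  have Ar := fun g => mkAdj r g v t hr
  refine (Nat.not_odd_iff_even.mpr ?_) hodd
  have evenPair : ∀ x y : Γ'.edgeSet, x ≠ y →
      ({x ∈ ({p, q, r} : Set Γ'.edgeSet) | Γ'.lineGraph.Adj x f} = {x, y}) →
      Even ({x ∈ ({p, q, r} : Set Γ'.edgeSet) | Γ'.lineGraph.Adj x f}.ncard) := by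
    intro x y hxy hS
    rw [hS, Set.ncard_pair hxy]
    exact even_two
  by_cases hfp : f = p
  · subst hfp
    refine evenPair q r hqr ?_
    ext x
    simp only [Set.mem_setOf_eq, Set.mem_insert_iff, Set.mem_singleton_iff]
    constructor
    · rintro ⟨rfl | rfl | rfl, hadj⟩
      · exact absurd hadj (Γ'.lineGraph.irrefl)
      · exact Or.inl rfl
      · exact Or.inr rfl
    · rintro (rfl | rfl)
      · exact ⟨Or.inr (Or.inl rfl), (Aq f).mpr ⟨Ne.symm hpq, Or.inl hup⟩⟩
      · exact ⟨Or.inr (Or.inr rfl), (Ar f).mpr ⟨Ne.symm hpr, Or.inr htp⟩⟩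
  by_cases hfq : f = q
  · subst hfq
    refine evenPair p r hpr ?_
    ext x
    simp only [Set.mem_setOf_eq, Set.mem_insert_iff, Set.mem_singleton_iff]
    constructor
    · rintro ⟨rfl | rfl | rfl, hadj⟩
      · exact Or.inl rfl
      · exact absurd hadj (Γ'.lineGraph.irrefl)
      · exact Or.inr rfl
    · rintro (rfl | rfl)
      · exact ⟨Or.inl rfl, (Ap f).mpr ⟨hpq, Or.inl huq⟩⟩
      · exact ⟨Or.inr (Or.inr rfl), (Ar f).mpr ⟨Ne.symm hqr, Or.inl hvq⟩⟩
  by_cases hfr : f = r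
  · subst hfr
    refine evenPair p q hpq ?_
    ext x
    simp only [Set.mem_setOf_eq, Set.mem_insert_iff, Set.mem_singleton_iff]
    constructor
    · rintro ⟨rfl | rfl | rfl, hadj⟩
      · exact Or.inl rfl
      · exact Or.inr rfl
      · exact absurd hadj (Γ'.lineGraph.irrefl)
    · rintro (rfl | rfl)
      · exact ⟨Or.inl rfl, (Ap f).mpr ⟨hpr, Or.inr htr⟩⟩
      · exact ⟨Or.inr (Or.inl rfl), (Aq f).mpr ⟨hqr, Or.inr hvr⟩⟩
  · by_cases hu : u ∈ (f : Sym2 V') <;> by_cases hv : v ∈ (f : Sym2 V') <;>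
      by_cases ht : t ∈ (f : Sym2 V')
    · exact absurd (Subtype.ext (((Sym2.mem_and_mem_iff huv).mp ⟨hu, hv⟩).trans hq.symm)) hfq
    · exact absurd (Subtype.ext (((Sym2.mem_and_mem_iff huv).mp ⟨hu, hv⟩).trans hq.symm)) hfq
    · exact absurd (Subtype.ext (((Sym2.mem_and_mem_iff hut).mp ⟨hu, ht⟩).trans hp.symm)) hfp
    · refine evenPair p q hpq ?_
      ext x
      simp only [Set.mem_setOf_eq, Set.mem_insert_iff, Set.mem_singleton_iff]
      constructor
      · rintro ⟨rfl | rfl | rfl, hadj⟩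
        · exact Or.inl rfl
        · exact Or.inr rfl
        · rcases ((Ar f).mp hadj).2 with h | h
          · exact absurd h hv
          · exact absurd h ht
      · rintro (rfl | rfl)
        · exact ⟨Or.inl rfl, (Ap f).mpr ⟨fun h => hfp h.symm, Or.inl hu⟩⟩
        · exact ⟨Or.inr (Or.inl rfl), (Aq f).mpr ⟨fun h => hfq h.symm, Or.inl hu⟩⟩
    · exact absurd (Subtype.ext (((Sym2.mem_and_mem_iff hvt).mp ⟨hv, ht⟩).trans hr.symm)) hfr
    · refine evenPair q r hqr ?_
      ext x
      simp only [Set.mem_setOf_eq, Set.mem_insert_iff, Set.mem_singleton_iff]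
      constructor
      · rintro ⟨rfl | rfl | rfl, hadj⟩
        · rcases ((Ap f).mp hadj).2 with h | h
          · exact absurd h hu
          · exact absurd h ht
        · exact Or.inl rfl
        · exact Or.inr rfl
      · rintro (rfl | rfl)
        · exact ⟨Or.inr (Or.inl rfl), (Aq f).mpr ⟨fun h => hfq h.symm, Or.inr hv⟩⟩
        · exact ⟨Or.inr (Or.inr rfl), (Ar f).mpr ⟨fun h => hfr h.symm, Or.inl hv⟩⟩
    · refine evenPair p r hpr ?_
      ext x
      simp only [Set.mem_setOf_eq, Set.mem_insert_iff, Set.mem_singleton_iff]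
      constructor
      · rintro ⟨rfl | rfl | rfl, hadj⟩
        · exact Or.inl rfl
        · rcases ((Aq f).mp hadj).2 with h | h
          · exact absurd h hu
          · exact absurd h hv
        · exact Or.inr rfl
      · rintro (rfl | rfl)
        · exact ⟨Or.inl rfl, (Ap f).mpr ⟨fun h => hfp h.symm, Or.inr ht⟩⟩
        · exact ⟨Or.inr (Or.inr rfl), (Ar f).mpr ⟨fun h => hfr h.symm, Or.inr ht⟩⟩
    · have hS : {x ∈ ({p, q, r} : Set Γ'.edgeSet) | Γ'.lineGraph.Adj x f} = ∅ := by
        ext x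
        simp only [Set.mem_setOf_eq, Set.mem_insert_iff, Set.mem_singleton_iff,
          Set.mem_empty_iff_false, iff_false, not_and]
        rintro (rfl | rfl | rfl) hadj
        · rcases ((Ap f).mp hadj).2 with h | h
          · exact hu h
          · exact ht h
        · rcases ((Aq f).mp hadj).2 with h | h
          · exact hu h
          · exact hv h
        · rcases ((Ar f).mp hadj).2 with h | h
          · exact hv h
          · exact ht h
      rw [hS, Set.ncard_empty]
      exact Even.zero

lemma even_structure {V : Type} (Γ : SimpleGraph V) (hconn : Γ.Connected)
    (w : V) (p q r : Γ.edgeSet) (hp : w ∈ (p : Sym2 V)) (hq : w ∈ (q : Sym2 V))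
    (hr : w ∈ (r : Sym2 V)) (hpq : p ≠ q) (hqr : q ≠ r) (hpr : p ≠ r)
    (hev : ∀ f : Γ.edgeSet,
      Even ({x ∈ ({p, q, r} : Set Γ.edgeSet) | Γ.lineGraph.Adj x f}.ncard)) :
    ∃ a b c : V, (p : Sym2 V) = s(w, a) ∧ (q : Sym2 V) = s(w, b) ∧ (r : Sym2 V) = s(w, c) ∧
      a ≠ w ∧ b ≠ w ∧ c ≠ w ∧ a ≠ b ∧ a ≠ c ∧ b ≠ c ∧
      Γ.Adj w a ∧ Γ.Adj w b ∧ Γ.Adj w c ∧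
      (∀ v : V, v = w ∨ v = a ∨ v = b ∨ v = c) := by
  classical
  obtain ⟨a, ha⟩ : ∃ a, (p : Sym2 V) = s(w, a) := ⟨Sym2.Mem.other hp, (Sym2.other_spec hp).symm⟩
  obtain ⟨b, hb⟩ : ∃ b, (q : Sym2 V) = s(w, b) := ⟨Sym2.Mem.other hq, (Sym2.other_spec hq).symm⟩
  obtain ⟨c, hc⟩ : ∃ c, (r : Sym2 V) = s(w, c) := ⟨Sym2.Mem.other hr, (Sym2.other_spec hr).symm⟩
  have hwa : Γ.Adj w a := Γ.mem_edgeSet.mp (ha ▸ p.2)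
  have hwb : Γ.Adj w b := Γ.mem_edgeSet.mp (hb ▸ q.2)
  have hwc : Γ.Adj w c := Γ.mem_edgeSet.mp (hc ▸ r.2)
  have haw : a ≠ w := fun h => Γ.irrefl (h ▸ hwa)
  have hbw : b ≠ w := fun h => Γ.irrefl (h ▸ hwb)
  have hcw : c ≠ w := fun h => Γ.irrefl (h ▸ hwc)
  have hab : a ≠ b := fun h => hpq (Subtype.ext (by rw [ha, hb, h]))
  have hac : a ≠ c := fun h => hpr (Subtype.ext (by rw [ha, hc, h]))
  have hbc : b ≠ c := fun h => hqr (Subtype.ext (by rw [hb, hc, h]))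
  refine ⟨a, b, c, ha, hb, hc, haw, hbw, hcw, hab, hac, hbc, hwa, hwb, hwc, ?_⟩
  have key : ∀ (p₁ q₁ r₁ : Γ.edgeSet) (a₁ b₁ c₁ : V),
      (p₁ : Sym2 V) = s(w, a₁) → (q₁ : Sym2 V) = s(w, b₁) → (r₁ : Sym2 V) = s(w, c₁) →
      a₁ ≠ w → b₁ ≠ w → c₁ ≠ w → a₁ ≠ b₁ → a₁ ≠ c₁ →
      ({p₁, q₁, r₁} : Set Γ.edgeSet) = {p, q, r} →
      ∀ y, Γ.Adj a₁ y → (y = w ∨ y = a₁ ∨ y = b₁ ∨ y = c₁) := by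
    intro p₁ q₁ r₁ a₁ b₁ c₁ hp₁ hq₁ hr₁ ha₁w hb₁w hc₁w ha₁b₁ ha₁c₁ hperm y hadj
    by_contra hy
    push_neg at hy
    obtain ⟨hyw, hya, hyb, hyc⟩ := hy
    set f : Γ.edgeSet := ⟨s(a₁, y), Γ.mem_edgeSet.mpr hadj⟩ with hf
    have hS : {x ∈ ({p, q, r} : Set Γ.edgeSet) | Γ.lineGraph.Adj x f} = {p₁} := by
      rw [← hperm]
      ext x
      simp only [Set.mem_setOf_eq, Set.mem_insert_iff, Set.mem_singleton_iff]
      constructor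
      · rintro ⟨hx | rfl | rfl, hadjx⟩
        · exact hx
        · exfalso
          rw [lineGraph_adj_iff_exists] at hadjx
          obtain ⟨-, z, hz1, hz2⟩ := hadjx
          rw [hq₁, Sym2.mem_iff] at hz1
          have hz2' : z = a₁ ∨ z = y := by
            rw [hf] at hz2; simpa [Sym2.mem_iff] using hz2
          rcases hz1 with rfl | rfl <;> rcases hz2' with h | h
          · exact ha₁w h.symm
          · exact hyw h.symm
          · exact ha₁b₁ h.symm
          · exact hyb h.symm
        · exfalso
          rw [lineGraph_adj_iff_exists] at hadjx
          obtain ⟨-, z, hz1, hz2⟩ := hadjx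
          rw [hr₁, Sym2.mem_iff] at hz1
          have hz2' : z = a₁ ∨ z = y := by
            rw [hf] at hz2; simpa [Sym2.mem_iff] using hz2
          rcases hz1 with rfl | rfl <;> rcases hz2' with h | h
          · exact ha₁w h.symm
          · exact hyw h.symm
          · exact ha₁c₁ h.symm
          · exact hyc h.symm
      · rintro rfl
        refine ⟨Or.inl rfl, ?_⟩
        rw [lineGraph_adj_iff_exists]
        refine ⟨fun hcontra => ?_, a₁, by rw [hp₁]; simp, by rw [hf]; simp⟩
        have h2 : s(w, a₁) = s(a₁, y) := by
          rw [← hp₁, Subtype.ext_iff.mp hcontra, hf]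
        rw [Sym2.eq_iff] at h2
        rcases h2 with ⟨h1, -⟩ | ⟨h1, -⟩
        · exact ha₁w h1.symm
        · exact hyw h1.symm
    have := hev f
    rw [hS, Set.ncard_singleton] at this
    exact (Nat.not_even_iff_odd.mpr odd_one) this
  have keyw : ∀ y, Γ.Adj w y → (y = a ∨ y = b ∨ y = c) := by
    intro y hadj
    by_contra hy
    push_neg at hy
    obtain ⟨hya, hyb, hyc⟩ := hy
    have hyw : y ≠ w := fun h => Γ.irrefl (h ▸ hadj).symm
    set f : Γ.edgeSet := ⟨s(w, y), Γ.mem_edgeSet.mpr hadj⟩ with hf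
    have hedge : ∀ (x₁ : Γ.edgeSet) (d : V), (x₁ : Sym2 V) = s(w, d) → d ≠ y →
        Γ.lineGraph.Adj x₁ f := by
      intro x₁ d hx₁ hdy
      rw [lineGraph_adj_iff_exists]
      refine ⟨fun hcontra => ?_, w, by rw [hx₁]; simp, by rw [hf]; simp⟩
      have h2 : s(w, d) = s(w, y) := by rw [← hx₁, Subtype.ext_iff.mp hcontra, hf]
      rw [Sym2.eq_iff] at h2
      rcases h2 with ⟨-, h1⟩ | ⟨h1, -⟩
      · exact hdy h1
      · exact hyw h1.symm
    have hS : {x ∈ ({p, q, r} : Set Γ.edgeSet) | Γ.lineGraph.Adj x f} = {p, q, r} := by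
      ext x
      simp only [Set.mem_setOf_eq, Set.mem_insert_iff, Set.mem_singleton_iff]
      constructor
      · exact fun h => h.1
      · rintro (rfl | rfl | rfl)
        · exact ⟨Or.inl rfl, hedge _ a ha (fun h => hya h.symm)⟩
        · exact ⟨Or.inr (Or.inl rfl), hedge _ b hb (fun h => hyb h.symm)⟩
        · exact ⟨Or.inr (Or.inr rfl), hedge _ c hc (fun h => hyc h.symm)⟩
    have := hev f
    rw [hS] at this
    have h3 : ({p, q, r} : Set Γ.edgeSet).ncard = 3 := by
      rw [Set.ncard_insert_of_notMem (by simp [hpq, hpr]), Set.ncard_pair hqr]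
    rw [h3] at this
    exact (by decide : ¬ Even 3) this
  have perm1 : ({q, p, r} : Set Γ.edgeSet) = {p, q, r} := by
    ext x; simp only [Set.mem_insert_iff, Set.mem_singleton_iff]; tauto
  have perm2 : ({r, p, q} : Set Γ.edgeSet) = {p, q, r} := by
    ext x; simp only [Set.mem_insert_iff, Set.mem_singleton_iff]; tauto
  have step : ∀ x y : V, (x = w ∨ x = a ∨ x = b ∨ x = c) → Γ.Adj x y →
      (y = w ∨ y = a ∨ y = b ∨ y = c) := by
    intro x y hx hadj
    rcases hx with h | h | h | h
    · rw [h] at hadj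
      rcases keyw y hadj with h' | h' | h' <;> tauto
    · rw [h] at hadj
      rcases key p q r a b c ha hb hc haw hbw hcw hab hac rfl y hadj with h' | h' | h' | h' <;>
        tauto
    · rw [h] at hadj
      rcases key q p r b a c hb ha hc hbw haw hcw hab.symm hbc perm1 y hadj
        with h' | h' | h' | h' <;> tauto
    · rw [h] at hadj
      rcases key r p q c a b hc ha hb hcw haw hbw hac.symm hbc.symm perm2 y hadj
        with h' | h' | h' | h' <;> tauto
  intro v
  have hreach : Γ.Reachable w v := hconn.preconnected w v
  refine hreach.elim (fun W => ?_)
  have main : ∀ {u u' : V} (_ : Γ.Walk u u'), (u = w ∨ u = a ∨ u = b ∨ u = c) →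
      (u' = w ∨ u' = a ∨ u' = b ∨ u' = c) := by
    intro u u' W
    induction W with
    | nil => exact id
    | cons h _ ih => exact fun hu => ih (step _ _ hu h)
  exact main W (Or.inl rfl)

lemma generic_phase {V G : Type} [Group G] (Γ : SimpleGraph V) (s : G)
    (hs : s * s = 1) (hsc : ∀ g : G, s * g = g * s)
    (ζ : Γ.edgeSet → Γ.edgeSet → G) (hζ : IsGainFun Γ.lineGraph ζ)
    (hall : ∀ (w : V) (p q r : Γ.edgeSet), w ∈ (p : Sym2 V) → w ∈ (q : Sym2 V) →
      w ∈ (r : Sym2 V) → p ≠ q → q ≠ r → p ≠ r → ζ p q * ζ q r * ζ r p = s) :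
    ∃ H : GPhase Γ G, PsiLEq s H ζ := by
  classical
  refine ⟨fun w e h =>
    if e = Exists.choose (⟨e, h⟩ : ∃ e' : Γ.edgeSet, w ∈ (e' : Sym2 V)) then 1
    else s * ζ (Exists.choose (⟨e, h⟩ : ∃ e' : Γ.edgeSet, w ∈ (e' : Sym2 V))) e, ?_⟩
  intro p q w hp hq hne
  have hex : ∃ e' : Γ.edgeSet, w ∈ (e' : Sym2 V) := ⟨p, hp⟩
  set e₀ := hex.choose with he₀
  have hw0 : w ∈ (e₀ : Sym2 V) := hex.choose_spec
  have Hp : (if p = e₀ then (1:G) else s * ζ e₀ p)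
      = if p = Exists.choose (⟨p, hp⟩ : ∃ e' : Γ.edgeSet, w ∈ (e' : Sym2 V)) then 1
        else s * ζ (Exists.choose (⟨p, hp⟩ : ∃ e' : Γ.edgeSet, w ∈ (e' : Sym2 V))) p := rfl
  have Hq : (if q = e₀ then (1:G) else s * ζ e₀ q)
      = if q = Exists.choose (⟨q, hq⟩ : ∃ e' : Γ.edgeSet, w ∈ (e' : Sym2 V)) then 1
        else s * ζ (Exists.choose (⟨q, hq⟩ : ∃ e' : Γ.edgeSet, w ∈ (e' : Sym2 V))) q := rfl
  dsimp only
  rw [← Hp, ← Hq]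
  by_cases h1 : p = e₀ <;> by_cases h2 : q = e₀
  · exact absurd (h1.trans h2.symm) hne
  · rw [if_pos h1, if_neg h2, h1, gl_alg1 hs]
  · rw [if_neg h1, if_pos h2, gl_alg2 hsc, h2]
    exact hζ ((lineGraph_adj_iff_exists).mpr ⟨fun h => h1 h.symm, w, hw0, hp⟩)
  · rw [if_neg h1, if_neg h2, gl_alg3 hsc]
    have hadj1 : Γ.lineGraph.Adj e₀ p :=
      (lineGraph_adj_iff_exists).mpr ⟨fun h => h1 h.symm, w, hw0, hp⟩
    have hadj2 : Γ.lineGraph.Adj p q :=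
      (lineGraph_adj_iff_exists).mpr ⟨hne, w, hp, hq⟩
    have E := hall w p e₀ q hp hw0 hq h1 (fun h => h2 h.symm) hne
    have h3 : ζ p e₀ * ζ e₀ q = s * ζ p q := by
      have h4 : (ζ q p)⁻¹ = ζ p q := by rw [hζ hadj2]; simp
      calc ζ p e₀ * ζ e₀ q = ζ p e₀ * ζ e₀ q * ζ q p * (ζ q p)⁻¹ := by group
        _ = s * ζ p q := by rw [E, h4]
    rw [hζ hadj1] at h3
    rw [mul_assoc, h3, ← mul_assoc, hs, one_mul]

def glK3 : SimpleGraph (Fin 3) :=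
  SimpleGraph.fromRel (fun _ _ => True)

instance : DecidableRel glK3.Adj := fun x y =>
  decidable_of_iff _ (SimpleGraph.fromRel_adj _ x y).symm

def glE01 : glK3.edgeSet := ⟨s(0,1), by decide⟩
def glE02 : glK3.edgeSet := ⟨s(0,2), by decide⟩
def glE12 : glK3.edgeSet := ⟨s(1,2), by decide⟩

lemma glK3_edges (e : glK3.edgeSet) : e = glE01 ∨ e = glE02 ∨ e = glE12 := by
  obtain ⟨z, hz⟩ := e
  have : ∀ z ∈ glK3.edgeSet, z = s(0,1) ∨ z = s(0,2) ∨ z = s(1,2) := by decide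
  rcases this z hz with h | h | h
  · exact Or.inl (Subtype.ext h)
  · exact Or.inr (Or.inl (Subtype.ext h))
  · exact Or.inr (Or.inr (Subtype.ext h))

lemma glK3_line_complete : ∀ p q : glK3.edgeSet, p ≠ q → glK3.lineGraph.Adj p q := by
  decide

lemma glK3_phase {G : Type} [Group G] (s : G) (hs : s * s = 1)
    (hsc : ∀ g : G, s * g = g * s) (ζ' : glK3.edgeSet → glK3.edgeSet → G)
    (hζ' : ∀ p q : glK3.edgeSet, p ≠ q → ζ' q p = (ζ' p q)⁻¹) :
    ∃ H : GPhase glK3 G, PsiLEq s H ζ' := by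
  classical
  refine ⟨fun w e _ =>
    if w = 0 then (if e = glE01 then 1 else s * ζ' glE01 glE02)
    else if w = 1 then (if e = glE01 then 1 else s * ζ' glE01 glE12)
    else (if e = glE02 then 1 else s * ζ' glE02 glE12), ?_⟩
  have h0102 : glE01 ≠ glE02 := by decide
  have h0112 : glE01 ≠ glE12 := by decide
  have h0212 : glE02 ≠ glE12 := by decide
  intro p q w hp hq hne
  rcases glK3_edges p with rfl | rfl | rfl <;> rcases glK3_edges q with rfl | rfl | rfl <;>
    try exact absurd rfl hne
  · have hw : w = 0 := by
      rcases Sym2.mem_iff.mp hp with rfl | rfl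
      · rfl
      · exact absurd hq (by decide)
    subst hw
    show ζ' glE01 glE02 = s * (1:G)⁻¹ * (s * ζ' glE01 glE02)
    rw [gl_alg1 hs]
  · have hw : w = 1 := by
      rcases Sym2.mem_iff.mp hp with rfl | rfl
      · exact absurd hq (by decide)
      · rfl
    subst hw
    show ζ' glE01 glE12 = s * (1:G)⁻¹ * (s * ζ' glE01 glE12)
    rw [gl_alg1 hs]
  · have hw : w = 0 := by
      rcases Sym2.mem_iff.mp hp with rfl | rfl
      · rfl
      · exact absurd hq (by decide)
    subst hw
    show ζ' glE02 glE01 = s * (s * ζ' glE01 glE02)⁻¹ * 1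
    rw [gl_alg2 hsc, ← hζ' glE01 glE02 h0102]
  · have hw : w = 2 := by
      rcases Sym2.mem_iff.mp hp with rfl | rfl
      · exact absurd hq (by decide)
      · rfl
    subst hw
    show ζ' glE02 glE12 = s * (1:G)⁻¹ * (s * ζ' glE02 glE12)
    rw [gl_alg1 hs]
  · have hw : w = 1 := by
      rcases Sym2.mem_iff.mp hp with rfl | rfl
      · rfl
      · exact absurd hq (by decide)
    subst hw
    show ζ' glE12 glE01 = s * (s * ζ' glE01 glE12)⁻¹ * 1
    rw [gl_alg2 hsc, ← hζ' glE01 glE12 h0112]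
  · have hw : w = 2 := by
      rcases Sym2.mem_iff.mp hp with rfl | rfl
      · exact absurd hq (by decide)
      · rfl
    subst hw
    show ζ' glE12 glE02 = s * (s * ζ' glE02 glE12)⁻¹ * 1
    rw [gl_alg2 hsc, ← hζ' glE02 glE12 h0212]

lemma quadFFF_line : Nonempty ((quadGraph False False False).lineGraph ≃g glK3.lineGraph) := by
  classical
  apply nonempty_iso_of_surj _ _
    ((fun e => if e = glE01 then ⟨s(0,1), by decide⟩
      else if e = glE02 then ⟨s(0,2), by decide⟩ else ⟨s(0,3), by decide⟩) :
      glK3.edgeSet → (quadGraph False False False).edgeSet)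
  · decide
  · decide

/-- **Corollary 3.4.** If `L = L(Γ)` is a line graph not isomorphic to `F₁`, `F₂` or
`F₃`, then `(L, ζ)` is a gain-line graph if and only if every odd triangle of `L` has
gain `s`. -/
theorem gainLine_iff_oddTriangles
    {V G : Type} [Group G] [Fintype V] (Γ : SimpleGraph V) (hconn : Γ.Connected)
    (hF₁ : ¬ Nonempty (Γ.lineGraph ≃g diamondGraph))
    (hF₂ : ¬ Nonempty (Γ.lineGraph ≃g wheel4))
    (hF₃ : ¬ Nonempty (Γ.lineGraph ≃g octahedron))
    (s : G) (hs : s * s = 1) (hsc : ∀ g : G, s * g = g * s)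
    (ζ : Γ.edgeSet → Γ.edgeSet → G) (hζ : IsGainFun Γ.lineGraph ζ) :
    IsGainLine s Γ.lineGraph ζ ↔
      ∀ a b c : Γ.edgeSet, OddTriangle Γ.lineGraph a b c →
        ζ a b * ζ b c * ζ c a = s := by
  classical
  constructor
  · -- forward direction
    rintro ⟨V', Γ', φ, H, hH⟩ a b c hodd
    have hodd' := oddTriangle_map φ hodd
    obtain ⟨w, hwp, hwq, hwr⟩ := commonVertex Γ' (φ a) (φ b) (φ c) hodd'
    obtain ⟨⟨hab, hbc, hac⟩, -⟩ := hodd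
    have hab' : φ a ≠ φ b := fun h => hab.ne (RelIso.injective φ h)
    have hbc' : φ b ≠ φ c := fun h => hbc.ne (RelIso.injective φ h)
    have hca' : φ c ≠ φ a := fun h => hac.ne.symm (RelIso.injective φ h)
    have e1 := hH (φ a) (φ b) w hwp hwq hab'
    have e2 := hH (φ b) (φ c) w hwq hwr hbc'
    have e3 := hH (φ c) (φ a) w hwr hwp hca'
    simp only [RelIso.symm_apply_apply] at e1 e2 e3
    rw [e1, e2, e3]
    exact gl_alg4 hs hsc _ _ _
  · -- backward direction
    intro hodd
    by_cases hall : ∀ (w : V) (p q r : Γ.edgeSet), w ∈ (p : Sym2 V) → w ∈ (q : Sym2 V) →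
        w ∈ (r : Sym2 V) → p ≠ q → q ≠ r → p ≠ r → ζ p q * ζ q r * ζ r p = s
    · obtain ⟨H, hH⟩ := generic_phase Γ s hs hsc ζ hζ hall
      refine ⟨V, Γ, (Iso.refl : Γ.lineGraph ≃g Γ.lineGraph), H, ?_⟩
      intro p q w' hp hq h
      simpa using hH p q w' hp hq h
    · push_neg at hall
      obtain ⟨w, p, q, r, hp, hq, hr, hpq, hqr, hpr, hne⟩ := hall
      have hadjpq : Γ.lineGraph.Adj p q := (lineGraph_adj_iff_exists).mpr ⟨hpq, w, hp, hq⟩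
      have hadjqr : Γ.lineGraph.Adj q r := (lineGraph_adj_iff_exists).mpr ⟨hqr, w, hq, hr⟩
      have hadjpr : Γ.lineGraph.Adj p r := (lineGraph_adj_iff_exists).mpr ⟨hpr, w, hp, hr⟩
      have hnotodd : ¬ OddTriangle Γ.lineGraph p q r := fun h => hne (hodd p q r h)
      have hev : ∀ f : Γ.edgeSet,
          Even ({x ∈ ({p, q, r} : Set Γ.edgeSet) | Γ.lineGraph.Adj x f}.ncard) := by
        intro f
        by_contra hodd2
        exact hnotodd ⟨⟨hadjpq, hadjqr, hadjpr⟩, f, Nat.not_even_iff_odd.mp hodd2⟩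
      obtain ⟨a, b, c, ha, hb, hc, haw, hbw, hcw, hab, hac, hbc, hwa, hwb, hwc, hallv⟩ :=
        even_structure Γ hconn w p q r hp hq hr hpq hqr hpr hev
      by_cases h1 : Γ.Adj a b <;> by_cases h2 : Γ.Adj a c <;> by_cases h3 : Γ.Adj b c
      · -- K4 : octahedron
        obtain ⟨ψ⟩ := iso_quadGraph Γ w a b c hallv haw hbw hcw hab hac hbc hwa hwb hwc
          (iff_true_intro h1) (iff_true_intro h2) (iff_true_intro h3)
        exact absurd ⟨(lineIso ψ).trans (Classical.choice quadTTT_line)⟩ hF₃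
      · obtain ⟨ψ⟩ := iso_quadGraph Γ w a b c hallv haw hbw hcw hab hac hbc hwa hwb hwc
          (iff_true_intro h1) (iff_true_intro h2) (iff_false_intro h3)
        exact absurd ⟨(lineIso ψ).trans (Classical.choice quadTTF_line)⟩ hF₂
      · obtain ⟨ψ⟩ := iso_quadGraph Γ w a b c hallv haw hbw hcw hab hac hbc hwa hwb hwc
          (iff_true_intro h1) (iff_false_intro h2) (iff_true_intro h3)
        exact absurd ⟨(lineIso ψ).trans (Classical.choice quadTFT_line)⟩ hF₂
      · obtain ⟨ψ⟩ := iso_quadGraph Γ w a b c hallv haw hbw hcw hab hac hbc hwa hwb hwc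
          (iff_true_intro h1) (iff_false_intro h2) (iff_false_intro h3)
        exact absurd ⟨(lineIso ψ).trans (Classical.choice quadTFF_line)⟩ hF₁
      · obtain ⟨ψ⟩ := iso_quadGraph Γ w a b c hallv haw hbw hcw hab hac hbc hwa hwb hwc
          (iff_false_intro h1) (iff_true_intro h2) (iff_true_intro h3)
        exact absurd ⟨(lineIso ψ).trans (Classical.choice quadFTT_line)⟩ hF₂
      · obtain ⟨ψ⟩ := iso_quadGraph Γ w a b c hallv haw hbw hcw hab hac hbc hwa hwb hwc
          (iff_false_intro h1) (iff_true_intro h2) (iff_false_intro h3)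
        exact absurd ⟨(lineIso ψ).trans (Classical.choice quadFTF_line)⟩ hF₁
      · obtain ⟨ψ⟩ := iso_quadGraph Γ w a b c hallv haw hbw hcw hab hac hbc hwa hwb hwc
          (iff_false_intro h1) (iff_false_intro h2) (iff_true_intro h3)
        exact absurd ⟨(lineIso ψ).trans (Classical.choice quadFFT_line)⟩ hF₁
      · -- star case
        obtain ⟨ψ⟩ := iso_quadGraph Γ w a b c hallv haw hbw hcw hab hac hbc hwa hwb hwc
          (iff_false_intro h1) (iff_false_intro h2) (iff_false_intro h3)
        have φ : Γ.lineGraph ≃g glK3.lineGraph :=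
          (lineIso ψ).trans (Classical.choice quadFFF_line)
        have hζ' : ∀ p' q' : glK3.edgeSet, p' ≠ q' →
            ζ (φ.symm q') (φ.symm p') = (ζ (φ.symm p') (φ.symm q'))⁻¹ := by
          intro p' q' hne'
          exact hζ ((φ.symm).map_adj_iff.mpr (glK3_line_complete p' q' hne'))
        obtain ⟨H, hH⟩ := glK3_phase s hs hsc
          (fun p' q' => ζ (φ.symm p') (φ.symm q')) hζ'
        exact ⟨Fin 3, glK3, φ, H, hH⟩
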